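/- Let f : ℝⁿ → ℝ ∪ {+∞} be proper, lower semicontinuous, and convex, and let P be symmetric positive definite. Then for all x ∈ ℝⁿ, prox_{f*,P}(x) = x − P⁻¹ · prox_{f,P⁻¹}(P x), where f* denotes the convex (Fenchel) conjugate of f. -/

import Mathlib

open Matrix

noncomputable section

def ERealConvexOn {E : Type*} [AddCommGroup E] [Module ℝ E] (f : E → EReal) : Prop :=
  ∀ u v : E, ∀ a b : ℝ, 0 ≤ a → 0 ≤ b → a + b = 1 →
    f (a • u + b • v) ≤ (a : EReal) * f u + (b : EReal) * f v

def ERealProper {E : Type*} (f : E → EReal) : Prop :=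
  (∀ x, f x ≠ ⊥) ∧ (∃ x, f x ≠ ⊤)

/-- `½‖u − z‖²_P`. -/
def quadP {n : ℕ} (P : Matrix (Fin n) (Fin n) ℝ) (z u : Fin n → ℝ) : ℝ :=
  (1 / 2) * ((u - z) ⬝ᵥ (P *ᵥ (u - z)))

/-- `u = prox_{f,P}(z)`, i.e. `u` minimizes `f(·) + ½‖· − z‖²_P`. -/
def IsProx {n : ℕ} (f : (Fin n → ℝ) → EReal) (P : Matrix (Fin n) (Fin n) ℝ)
    (z u : Fin n → ℝ) : Prop :=
  ∀ v : Fin n → ℝ, f u + ((quadP P z u : ℝ) : EReal) ≤ f v + ((quadP P z v : ℝ) : EReal)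

/-- The convex (Fenchel) conjugate `f*(y) = sup_x (⟨x,y⟩ − f(x))`. -/
def econj {n : ℕ} (f : (Fin n → ℝ) → EReal) (y : Fin n → ℝ) : EReal :=
  ⨆ x : Fin n → ℝ, (((x ⬝ᵥ y : ℝ)) : EReal) - f x

lemma dotSymm {n:ℕ} {P : Matrix (Fin n) (Fin n) ℝ} (h : Pᵀ = P) (a b : Fin n → ℝ) :
    a ⬝ᵥ P *ᵥ b = b ⬝ᵥ P *ᵥ a := by
  rw [Matrix.dotProduct_mulVec, ← h, Matrix.vecMul_transpose, dotProduct_comm, h]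

lemma quad_expand {n:ℕ} {P : Matrix (Fin n) (Fin n) ℝ} (h : Pᵀ = P) (z y d : Fin n → ℝ) (t : ℝ) :
    quadP P z (y + t • d) = quadP P z y + t * (d ⬝ᵥ P *ᵥ (y - z)) + t^2/2 * (d ⬝ᵥ P *ᵥ d) := by
  have h1 : y + t • d - z = (y - z) + t • d := by abel
  simp only [quadP, h1, Matrix.mulVec_add, Matrix.mulVec_smul, dotProduct_add, add_dotProduct,
    smul_dotProduct, dotProduct_smul, smul_eq_mul]
  rw [dotSymm h (y - z) d]
  ring

lemma final_identity {n:ℕ} {P : Matrix (Fin n) (Fin n) ℝ} (h : Pᵀ = P) (x u c : Fin n → ℝ) :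
    (P *ᵥ c) ⬝ᵥ u + quadP P x u - ((P *ᵥ c) ⬝ᵥ (x - c) + quadP P x (x - c))
      = (1/2) * ((u - (x - c)) ⬝ᵥ P *ᵥ (u - (x - c))) := by
  have e1 : u - (x - c) = (u - x) + c := by abel
  have e2 : x - c - x = -c := by abel
  simp only [quadP, e1, e2, Matrix.mulVec_add, Matrix.mulVec_sub, Matrix.mulVec_neg,
    dotProduct_add, add_dotProduct, dotProduct_sub, sub_dotProduct, dotProduct_neg,
    neg_dotProduct]
  have s2 := dotSymm h c u
  have s3 := dotSymm h c x
  have s4 := dotSymm h x u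
  have t1 := dotProduct_comm (P *ᵥ c) u
  have t2 := dotProduct_comm (P *ᵥ c) x
  have t3 := dotProduct_comm (P *ᵥ c) c
  linarith

/-- Generalized Moreau decomposition: `prox_{f*,P}(x) = x − P⁻¹ prox_{f,P⁻¹}(Px)`. -/
theorem prox_conj_decomposition {n : ℕ} (f : (Fin n → ℝ) → EReal)
    (hproper : ERealProper f) (hlsc : LowerSemicontinuous f) (hconv : ERealConvexOn f)
    (P : Matrix (Fin n) (Fin n) ℝ) (hP : P.PosDef) (x u v : Fin n → ℝ)
    (hu : IsProx (econj f) P x u)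
    (hv : IsProx f P⁻¹ (P *ᵥ x) v) :
    u = x - P⁻¹ *ᵥ v := by
  have hPt : Pᵀ = P := by
    have := hP.1
    rwa [Matrix.IsHermitian, conjTranspose_eq_transpose_of_trivial] at this
  have hPinvPD : (P⁻¹).PosDef := hP.inv
  have hPinvT : (P⁻¹)ᵀ = P⁻¹ := by
    have := hPinvPD.1
    rwa [Matrix.IsHermitian, conjTranspose_eq_transpose_of_trivial] at this
  have hd : IsUnit P.det := isUnit_iff_ne_zero.2 hP.det_pos.ne'
  have hPv : P *ᵥ (P⁻¹ *ᵥ v) = v := by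
    rw [Matrix.mulVec_mulVec, Matrix.mul_nonsing_inv P hd, Matrix.one_mulVec]
  have hPxinv : P⁻¹ *ᵥ (P *ᵥ x) = x := by
    rw [Matrix.mulVec_mulVec, Matrix.nonsing_inv_mul P hd, Matrix.one_mulVec]
  set c : Fin n → ℝ := P⁻¹ *ᵥ v with hc
  set w₀ : Fin n → ℝ := x - c with hw₀
  -- Step 1: f v is real
  obtain ⟨v₁, hv₁⟩ := hproper.2
  have hv₁b := hproper.1 v₁
  have hvt : f v ≠ ⊤ := by
    intro hT
    have h0 := hv v₁
    rw [hT, (EReal.coe_toReal hv₁ hv₁b).symm, ← EReal.coe_add] at h0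
    simp only [EReal.top_add_coe, top_le_iff] at h0
    exact EReal.coe_ne_top _ h0
  set r : ℝ := (f v).toReal with hr
  have hfv : f v = (r : EReal) := (EReal.coe_toReal hvt (hproper.1 v)).symm
  -- Step 2: subgradient inequality:  r + ⟨w − v, w₀⟩ ≤ f w  for all w
  have key : ∀ w : Fin n → ℝ, ((r + (w - v) ⬝ᵥ w₀ : ℝ) : EReal) ≤ f w := by
    intro w
    by_cases hw : f w = ⊤
    · rw [hw]; exact le_top
    set s : ℝ := (f w).toReal with hs
    have hfw : f w = (s : EReal) := (EReal.coe_toReal hw (hproper.1 w)).symm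
    set d : Fin n → ℝ := w - v with hdd
    set B : ℝ := d ⬝ᵥ P⁻¹ *ᵥ (v - P *ᵥ x) with hB
    set K : ℝ := d ⬝ᵥ P⁻¹ *ᵥ d with hK
    have hKnn : 0 ≤ K := by simpa using hPinvPD.posSemidef.dotProduct_mulVec_nonneg d
    have hstep : ∀ t : ℝ, 0 < t → t ≤ 1 → r ≤ s + B + t/2 * K := by
      intro t ht ht1
      have hcv := hconv w v t (1 - t) ht.le (by linarith) (by ring)
      have heq : t • w + (1 - t) • v = v + t • d := by
        rw [hdd]; module
      rw [heq, hfw, hfv, ← EReal.coe_mul, ← EReal.coe_mul, ← EReal.coe_add] at hcv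
      have h2 := hv (v + t • d)
      rw [hfv] at h2
      have h3 : (r : EReal) + ((quadP P⁻¹ (P *ᵥ x) v : ℝ) : EReal)
          ≤ ((t * s + (1 - t) * r : ℝ) : EReal) + ((quadP P⁻¹ (P *ᵥ x) (v + t • d) : ℝ) : EReal) :=
        le_trans h2 (add_le_add_left hcv _)
      rw [← EReal.coe_add, ← EReal.coe_add] at h3
      have h4 : r + quadP P⁻¹ (P *ᵥ x) v ≤ t * s + (1 - t) * r + quadP P⁻¹ (P *ᵥ x) (v + t • d) :=
        EReal.coe_le_coe_iff.mp h3
      rw [quad_expand hPinvT (P *ᵥ x) v d t] at h4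
      rw [hB, hK] at *
      nlinarith [h4]
    have hlim : r ≤ s + B := by
      by_contra hcon
      push_neg at hcon
      have hδ : 0 < r - (s + B) := by linarith
      have ht0 : 0 < min 1 ((r - (s + B)) / (K + 1)) := by positivity
      have := hstep _ ht0 (min_le_left _ _)
      have hmin : min 1 ((r - (s + B)) / (K + 1)) ≤ (r - (s + B)) / (K + 1) := min_le_right _ _
      have hK1 : (0:ℝ) < K + 1 := by linarith
      have : r ≤ s + B + ((r - (s + B)) / (K + 1)) / 2 * K := by nlinarith
      have hdiv : ((r - (s + B)) / (K + 1)) * K ≤ r - (s + B) := by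
        rw [div_mul_eq_mul_div, div_le_iff₀ hK1]
        nlinarith
      linarith
    have hBw : B = -(d ⬝ᵥ w₀) := by
      rw [hB, hw₀, hc]
      rw [Matrix.mulVec_sub, hPxinv]
      have : x - P⁻¹ *ᵥ v = -(P⁻¹ *ᵥ v - x) := by abel
      rw [this, dotProduct_neg, dotProduct_sub]
      simp [dotProduct_sub]
    rw [hfw]
    apply EReal.coe_le_coe_iff.mpr
    linarith [hlim, hBw]
  -- Step 3: conjugate bounds
  have hconj_lb : ∀ y : Fin n → ℝ, ((v ⬝ᵥ y - r : ℝ) : EReal) ≤ econj f y := by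
    intro y
    have h0 : ((v ⬝ᵥ y : ℝ) : EReal) - f v ≤ econj f y :=
      le_iSup (fun w => ((w ⬝ᵥ y : ℝ) : EReal) - f w) v
    rwa [hfv, ← EReal.coe_sub] at h0
  have hconj_ub : econj f w₀ ≤ ((v ⬝ᵥ w₀ - r : ℝ) : EReal) := by
    apply iSup_le
    intro w
    have hk := key w
    calc ((w ⬝ᵥ w₀ : ℝ) : EReal) - f w
        ≤ ((w ⬝ᵥ w₀ : ℝ) : EReal) - ((r + (w - v) ⬝ᵥ w₀ : ℝ) : EReal) :=
          EReal.sub_le_sub le_rfl hk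
      _ = ((v ⬝ᵥ w₀ - r : ℝ) : EReal) := by
          rw [← EReal.coe_sub]
          congr 1
          rw [sub_dotProduct]
          ring
  -- Step 4: conclude
  have h4 := hu w₀
  have h5 : ((v ⬝ᵥ u - r + quadP P x u : ℝ) : EReal)
      ≤ ((v ⬝ᵥ w₀ - r + quadP P x w₀ : ℝ) : EReal) := by
    calc ((v ⬝ᵥ u - r + quadP P x u : ℝ) : EReal)
        = ((v ⬝ᵥ u - r : ℝ) : EReal) + ((quadP P x u : ℝ) : EReal) := EReal.coe_add _ _
      _ ≤ econj f u + ((quadP P x u : ℝ) : EReal) := add_le_add_left (hconj_lb u) _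
      _ ≤ econj f w₀ + ((quadP P x w₀ : ℝ) : EReal) := h4
      _ ≤ ((v ⬝ᵥ w₀ - r : ℝ) : EReal) + ((quadP P x w₀ : ℝ) : EReal) :=
          add_le_add_left hconj_ub _
      _ = ((v ⬝ᵥ w₀ - r + quadP P x w₀ : ℝ) : EReal) := (EReal.coe_add _ _).symm
  have h6 : v ⬝ᵥ u + quadP P x u ≤ v ⬝ᵥ w₀ + quadP P x w₀ := by
    have := EReal.coe_le_coe_iff.mp h5
    linarith
  have hid := final_identity hPt x u c
  rw [hPv] at hid
  have h7 : (u - w₀) ⬝ᵥ P *ᵥ (u - w₀) ≤ 0 := by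
    rw [hw₀]
    nlinarith [hid, h6]
  have h8 : u - w₀ = 0 := by
    by_contra hne
    have hpos : 0 < (u - w₀) ⬝ᵥ P *ᵥ (u - w₀) := by
      have := hP.dotProduct_mulVec_pos hne
      simpa using this
    linarith
  have := sub_eq_zero.mp h8
  rw [this, hw₀, hc]
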